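/- Fix integers n ≥ 1 and m ≥ d ≥ 1. Then lim_{p→0+} [ Σ_{j=0}^{n-1} C(n+m,j)·(1-p)^j·p^{n+m-j} ] / [ 1 - (1 - p^d)^n ] = 0, where C(a,b) denotes the binomial coefficient. -/

import Mathlib

open Filter

/-- For `m ≥ d`, the MDS batch tail (a binomial tail decaying like `p^{m+1}`) is negligible
compared to the replication-d batch tail `1 - (1 - p^d)^n` as `p → 0⁺`. -/
theorem mds_tail_negligible_vs_replication
    (n m d : ℕ) (hn : 1 ≤ n) (hd : 1 ≤ d) (hmd : d ≤ m) :
    Tendsto (fun p : ℝ =>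
        (∑ j ∈ Finset.range n, ((n + m).choose j : ℝ) * (1 - p) ^ j * p ^ (n + m - j)) /
          (1 - (1 - p ^ d) ^ n))
      (nhdsWithin 0 (Set.Ioi 0)) (nhds 0) := by
  set C : ℝ := ∑ j ∈ Finset.range n, ((n + m).choose j : ℝ) with hCdef
  have hC : 0 ≤ C := Finset.sum_nonneg (fun j _ => by positivity)
  have hmem : Set.Ioo (0:ℝ) 1 ∈ nhdsWithin (0:ℝ) (Set.Ioi 0) :=
    Ioo_mem_nhdsGT_of_mem (by constructor <;> norm_num)
  have hg : Tendsto (fun p : ℝ => C * p ^ (m + 1 - d)) (nhdsWithin 0 (Set.Ioi 0)) (nhds 0) := by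
    have h0 : C * (0:ℝ) ^ (m + 1 - d) = 0 := by
      rw [zero_pow (by omega)]; ring
    have := (((continuous_pow (m + 1 - d)).tendsto (0:ℝ)).const_mul C)
    rw [h0] at this
    exact this.mono_left nhdsWithin_le_nhds
  have hnn : ∀ᶠ p in nhdsWithin (0:ℝ) (Set.Ioi 0), 0 ≤
      (∑ j ∈ Finset.range n, ((n + m).choose j : ℝ) * (1 - p) ^ j * p ^ (n + m - j)) /
        (1 - (1 - p ^ d) ^ n) := by
    filter_upwards [hmem] with p hp
    have hp0 : 0 < p := hp.1
    have hp1 : p < 1 := hp.2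
    have hnum : 0 ≤ ∑ j ∈ Finset.range n, ((n + m).choose j : ℝ) * (1 - p) ^ j * p ^ (n + m - j) :=
      Finset.sum_nonneg (fun j _ => mul_nonneg
        (mul_nonneg (by positivity) (pow_nonneg (by linarith) _)) (by positivity))
    have hx : 0 < p ^ d := by positivity
    have hx1 : p ^ d ≤ 1 := pow_le_one₀ hp0.le hp1.le
    have hpow : (1 - p ^ d) ^ n ≤ (1 - p ^ d) ^ 1 :=
      pow_le_pow_of_le_one (by linarith) (by linarith) hn
    rw [pow_one] at hpow
    have hden : 0 < 1 - (1 - p ^ d) ^ n := by linarith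
    exact div_nonneg hnum hden.le
  have hle : ∀ᶠ p in nhdsWithin (0:ℝ) (Set.Ioi 0),
      (∑ j ∈ Finset.range n, ((n + m).choose j : ℝ) * (1 - p) ^ j * p ^ (n + m - j)) /
        (1 - (1 - p ^ d) ^ n) ≤ C * p ^ (m + 1 - d) := by
    filter_upwards [hmem] with p hp
    have hp0 : 0 < p := hp.1
    have hp1 : p < 1 := hp.2
    have hx : 0 < p ^ d := by positivity
    have hx1 : p ^ d ≤ 1 := pow_le_one₀ hp0.le hp1.le
    have hpow : (1 - p ^ d) ^ n ≤ (1 - p ^ d) ^ 1 :=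
      pow_le_pow_of_le_one (by linarith) (by linarith) hn
    rw [pow_one] at hpow
    have hden : p ^ d ≤ 1 - (1 - p ^ d) ^ n := by linarith
    have hnum : (∑ j ∈ Finset.range n, ((n + m).choose j : ℝ) * (1 - p) ^ j * p ^ (n + m - j))
        ≤ C * p ^ (m + 1) := by
      rw [hCdef, Finset.sum_mul]
      apply Finset.sum_le_sum
      intro j hj
      have hjn : j < n := Finset.mem_range.mp hj
      have h1 : (1 - p) ^ j ≤ 1 := pow_le_one₀ (by linarith) (by linarith)
      have h2 : p ^ (n + m - j) ≤ p ^ (m + 1) :=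
        pow_le_pow_of_le_one hp0.le hp1.le (by omega)
      calc ((n + m).choose j : ℝ) * (1 - p) ^ j * p ^ (n + m - j)
          ≤ ((n + m).choose j : ℝ) * 1 * p ^ (m + 1) := by
            apply mul_le_mul _ h2 (by positivity) (by positivity)
            exact mul_le_mul_of_nonneg_left h1 (by positivity)
        _ = ((n + m).choose j : ℝ) * p ^ (m + 1) := by ring
    calc (∑ j ∈ Finset.range n, ((n + m).choose j : ℝ) * (1 - p) ^ j * p ^ (n + m - j)) /
          (1 - (1 - p ^ d) ^ n)
        ≤ (C * p ^ (m + 1)) / (p ^ d) := by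
          apply div_le_div₀ (by positivity) hnum hx hden
      _ = C * p ^ (m + 1 - d) := by
          rw [mul_div_assoc, pow_sub₀ p hp0.ne' (by omega : d ≤ m + 1), div_eq_mul_inv]
  exact squeeze_zero' hnn hle hg
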